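/- Let Y be a nonempty finite set, πref a probability mass function on Y with full support, πsam a probability mass function on Y, r : Y → ℝ, and β > 0. Define Z = Σ_{y∈Y} πref(y)·exp(r(y)/β) and the softmax policy πr(y) = πref(y)·exp(r(y)/β)/Z, and let y* ∈ Y maximize r over Y. Then | Σ_{y,y'∈Y} πr(y)·πsam(y')·σ( β·log(πr(y)/πref(y)) − β·log(πr(y')/πref(y')) ) − Σ_{y'∈Y} πsam(y')·σ( −β·log(πr(y')/πref(y')) ) | ≤ (β/2)·log(1/πref(y*)). (The pointwise, single-prompt form of the lemma justifying the lightweight implementation of SE-POPO: the on-policy exploration bonus G and its off-policy surrogate H differ by at most (β/2) times the KL divergence of the point mass at y* from πref.) -/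

import Mathlib

/-- The sigmoid function σ(t) = e^t / (1 + e^t). -/
noncomputable def sigmoid (t : ℝ) : ℝ := Real.exp t / (1 + Real.exp t)

lemma sigmoid_hasDerivAt (t : ℝ) :
    HasDerivAt sigmoid (Real.exp t / (1 + Real.exp t) ^ 2) t := by
  have h1 : HasDerivAt (fun t => 1 + Real.exp t) (Real.exp t) t :=
    (Real.hasDerivAt_exp t).const_add 1
  have h2 : (1 + Real.exp t) ≠ 0 := by positivity
  have h3 := (Real.hasDerivAt_exp t).div h1 h2
  convert h3 using 1
  · rfl
  · rfl
  · rfl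
  · ring

lemma sigmoid_lipschitz (s t : ℝ) : |sigmoid s - sigmoid t| ≤ |s - t| / 4 := by
  have := Convex.norm_image_sub_le_of_norm_hasDerivWithin_le
    (f := sigmoid) (f' := fun x => Real.exp x / (1 + Real.exp x) ^ 2)
    (C := 1 / 4) (s := Set.univ)
    (fun x _ => (sigmoid_hasDerivAt x).hasDerivWithinAt)
    (fun x _ => by
      rw [Real.norm_eq_abs, abs_of_nonneg (by positivity)]
      rw [div_le_div_iff₀ (by positivity) (by norm_num)]
      nlinarith [Real.exp_pos x, sq_nonneg (1 - Real.exp x)])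
    convex_univ (Set.mem_univ t) (Set.mem_univ s)
  rw [Real.norm_eq_abs, Real.norm_eq_abs] at this
  linarith

open Finset in
/-- Single-prompt form of the lemma justifying the lightweight implementation of SE-POPO:
the on-policy exploration bonus G and its off-policy surrogate H differ by at most
(β/2) times the KL divergence of the point mass at y* from πref. -/
theorem onpolicy_offpolicy_bonus_gap
    {Y : Type*} [Fintype Y] [Nonempty Y]
    (πref : Y → ℝ) (hpos : ∀ y, 0 < πref y) (hsum : ∑ y, πref y = 1)
    (πsam : Y → ℝ) (hsamnn : ∀ y, 0 ≤ πsam y) (hsamsum : ∑ y, πsam y = 1)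
    (r : Y → ℝ) (β : ℝ) (hβ : 0 < β)
    (Z : ℝ) (hZ : Z = ∑ y, πref y * Real.exp (r y / β))
    (πr : Y → ℝ) (hπr : ∀ y, πr y = πref y * Real.exp (r y / β) / Z)
    (ystar : Y) (hstar : ∀ y, r y ≤ r ystar) :
    |(∑ y, ∑ y', πr y * πsam y' *
          sigmoid (β * Real.log (πr y / πref y) - β * Real.log (πr y' / πref y'))) -
        ∑ y', πsam y' * sigmoid (-(β * Real.log (πr y' / πref y')))| ≤
      β / 2 * Real.log (1 / πref ystar) := by
  classical
  have hZpos : 0 < Z := by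
    rw [hZ]
    exact Finset.sum_pos (fun y _ => mul_pos (hpos y) (Real.exp_pos _)) Finset.univ_nonempty
  have hπrpos : ∀ y, 0 < πr y := fun y => by
    rw [hπr]; exact div_pos (mul_pos (hpos y) (Real.exp_pos _)) hZpos
  set a : Y → ℝ := fun y => β * Real.log (πr y / πref y) with haDef
  have haY : ∀ y, β * Real.log (πr y / πref y) = a y := fun y => rfl
  have hπrsum : ∑ y, πr y = 1 := by
    rw [Finset.sum_congr rfl (fun y _ => hπr y), ← Finset.sum_div, ← hZ, div_self hZpos.ne']
  set L := Real.log (1 / πref ystar) with hLdef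
  have hrefle : πref ystar ≤ 1 := by
    rw [← hsum]
    exact Finset.single_le_sum (fun y _ => (hpos y).le) (Finset.mem_univ ystar)
  have hLnn : 0 ≤ L := Real.log_nonneg ((one_le_div (hpos ystar)).2 hrefle)
  have hLeq : L = -Real.log (πref ystar) := by rw [hLdef, one_div, Real.log_inv]
  have hZge : πref ystar * Real.exp (r ystar / β) ≤ Z := by
    rw [hZ]
    exact Finset.single_le_sum (f := fun y => πref y * Real.exp (r y / β))
      (fun y _ => (mul_pos (hpos y) (Real.exp_pos _)).le) (Finset.mem_univ ystar)
  have hlogZ : Real.log (πref ystar) + r ystar / β ≤ Real.log Z := by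
    have h1 : Real.log (πref ystar * Real.exp (r ystar / β)) ≤ Real.log Z :=
      Real.log_le_log (mul_pos (hpos ystar) (Real.exp_pos _)) hZge
    rwa [Real.log_mul (hpos ystar).ne' (Real.exp_ne_zero _), Real.log_exp] at h1
  have ha : ∀ y, a y = r y - β * Real.log Z := by
    intro y
    have hq : πr y / πref y = Real.exp (r y / β) / Z := by
      rw [hπr y]; field_simp [(hpos y).ne', hZpos.ne']
    show β * Real.log (πr y / πref y) = r y - β * Real.log Z
    rw [hq, Real.log_div (Real.exp_ne_zero _) hZpos.ne', Real.log_exp, mul_sub,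
      mul_div_cancel₀ _ hβ.ne']
  have haub : ∀ y, a y ≤ β * L := by
    intro y
    rw [ha y, hLeq]
    have h2 := hstar y
    have h3 : β * Real.log (πref ystar) + r ystar ≤ β * Real.log Z := by
      have h4 := mul_le_mul_of_nonneg_left hlogZ hβ.le
      rw [mul_add, mul_div_cancel₀ _ hβ.ne'] at h4
      exact h4
    linarith
  have hKL : 0 ≤ ∑ y, πr y * a y := by
    have key : ∀ y, β * (πr y - πref y) ≤ πr y * a y := by
      intro y
      have h1 : Real.log (πref y / πr y) ≤ πref y / πr y - 1 :=
        Real.log_le_sub_one_of_pos (div_pos (hpos y) (hπrpos y))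
      have h2 : Real.log (πref y / πr y) = -Real.log (πr y / πref y) := by
        rw [← Real.log_inv]; congr 1; rw [inv_div]
      have h3 := mul_le_mul_of_nonneg_left h1 (mul_pos hβ (hπrpos y)).le
      rw [h2] at h3
      have h4 : (β * πr y) * (πref y / πr y - 1) = β * (πref y - πr y) := by
        field_simp [(hπrpos y).ne']
      rw [h4] at h3
      show β * (πr y - πref y) ≤ πr y * (β * Real.log (πr y / πref y))
      nlinarith [h3]
    calc (0:ℝ) = ∑ y, β * (πr y - πref y) := by
          rw [← Finset.mul_sum, Finset.sum_sub_distrib, hπrsum, hsum]; ring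
      _ ≤ ∑ y, πr y * a y := Finset.sum_le_sum (fun y _ => key y)
  set S := ∑ y, πr y * |a y| with hSdef
  have hS : S ≤ 2 * (β * L) := by
    have h1 : ∀ y, πr y * |a y| ≤ πr y * (2 * (β * L)) - πr y * a y := by
      intro y
      have habs : |a y| = 2 * max (a y) 0 - a y := by
        rcases le_or_gt 0 (a y) with h | h
        · rw [abs_of_nonneg h, max_eq_left h]; ring
        · rw [abs_of_neg h, max_eq_right h.le]; ring
      have hmax : max (a y) 0 ≤ β * L := max_le (haub y) (mul_nonneg hβ.le hLnn)
      rw [habs, mul_sub]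
      exact sub_le_sub_right
        (mul_le_mul_of_nonneg_left (by linarith) (hπrpos y).le) _
    calc S ≤ ∑ y, (πr y * (2 * (β * L)) - πr y * a y) := Finset.sum_le_sum (fun y _ => h1 y)
      _ = 2 * (β * L) - ∑ y, πr y * a y := by
          rw [Finset.sum_sub_distrib, ← Finset.sum_mul, hπrsum]; ring
      _ ≤ 2 * (β * L) := by linarith
  have hSnn : 0 ≤ S :=
    Finset.sum_nonneg (fun y _ => mul_nonneg (hπrpos y).le (abs_nonneg _))
  have hinner : ∀ y', |(∑ y, πr y * sigmoid (a y - a y')) - sigmoid (-(a y'))| ≤ S / 4 := by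
    intro y'
    have h0 : sigmoid (-(a y')) = ∑ y, πr y * sigmoid (-(a y')) := by
      rw [← Finset.sum_mul, hπrsum, one_mul]
    rw [h0, ← Finset.sum_sub_distrib]
    calc |∑ y, (πr y * sigmoid (a y - a y') - πr y * sigmoid (-(a y')))|
        ≤ ∑ y, |πr y * sigmoid (a y - a y') - πr y * sigmoid (-(a y'))| :=
          Finset.abs_sum_le_sum_abs _ _
      _ ≤ ∑ y, πr y * (|a y| / 4) := by
          apply Finset.sum_le_sum
          intro y _
          rw [← mul_sub, abs_mul, abs_of_nonneg (hπrpos y).le]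
          refine mul_le_mul_of_nonneg_left ?_ (hπrpos y).le
          have h := sigmoid_lipschitz (a y - a y') (-(a y'))
          have he : a y - a y' - (-(a y')) = a y := by ring
          rwa [he] at h
      _ = S / 4 := by
          rw [hSdef, Finset.sum_div]
          exact Finset.sum_congr rfl (fun y _ => (mul_div_assoc _ _ _).symm)
  simp only [haY]
  have hG : (∑ y, ∑ y', πr y * πsam y' * sigmoid (a y - a y'))
      = ∑ y', πsam y' * ∑ y, πr y * sigmoid (a y - a y') := by
    rw [Finset.sum_comm]
    refine Finset.sum_congr rfl (fun y' _ => ?_)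
    rw [Finset.mul_sum]
    exact Finset.sum_congr rfl (fun y _ => by ring)
  rw [hG, ← Finset.sum_sub_distrib]
  have hfinal : |∑ y', (πsam y' * ∑ y, πr y * sigmoid (a y - a y')
      - πsam y' * sigmoid (-(a y')))| ≤ S / 4 := by
    calc |∑ y', (πsam y' * ∑ y, πr y * sigmoid (a y - a y') - πsam y' * sigmoid (-(a y')))|
        ≤ ∑ y', |πsam y' * ∑ y, πr y * sigmoid (a y - a y') - πsam y' * sigmoid (-(a y'))| :=
          Finset.abs_sum_le_sum_abs _ _
      _ ≤ ∑ y', πsam y' * (S / 4) := by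
          apply Finset.sum_le_sum
          intro y' _
          rw [← mul_sub, abs_mul, abs_of_nonneg (hsamnn y')]
          exact mul_le_mul_of_nonneg_left (hinner y') (hsamnn y')
      _ = S / 4 := by rw [← Finset.sum_mul, hsamsum, one_mul]
  calc |∑ y', (πsam y' * ∑ y, πr y * sigmoid (a y - a y') - πsam y' * sigmoid (-(a y')))|
      ≤ S / 4 := hfinal
    _ ≤ 2 * (β * L) / 4 := by linarith
    _ = β / 2 * L := by ring
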